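/- arXiv:1605.04564 — 4 statements merged into one kernel-verified Lean document; each statement's English description precedes it below -/
import Mathlib

section
/- Let 0 < n < 1 and define f(x) = (1/2)(−(1 + nx²) + √((1 + nx²)² + 4(1−n)x²)) for x > 0. Then f is strictly increasing on (0, ∞). In particular the positive eigenvalues λ⁺_j(n) = f(πj) are strictly increasing in the integer j ≥ 1 (Lemma 3.1(i)). -/
open Real

/-- `λ⁺_j(n)`: the larger root of the characteristic polynomial of the `j`-th Fourier mode. -/
noncomputable def lamPlus (n : ℝ) (j : ℕ) : ℝ :=
  (1 / 2) * (-(1 + n * π ^ 2 * (j : ℝ) ^ 2) +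
    Real.sqrt ((1 + n * π ^ 2 * (j : ℝ) ^ 2) ^ 2 + 4 * (1 - n) * π ^ 2 * (j : ℝ) ^ 2))

theorem stmt3 (n : ℝ) (hn0 : 0 < n) (hn1 : n < 1) (f : ℝ → ℝ)
    (hf : ∀ x : ℝ, f x = (1 / 2) * (-(1 + n * x ^ 2) +
      Real.sqrt ((1 + n * x ^ 2) ^ 2 + 4 * (1 - n) * x ^ 2))) :
    StrictMonoOn f (Set.Ioi (0 : ℝ)) ∧
    (∀ j : ℕ, 1 ≤ j → lamPlus n j = f (π * (j : ℝ))) ∧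
    (∀ j k : ℕ, 1 ≤ j → j < k → lamPlus n j < lamPlus n k) := by
  have hfe : f = fun x => (1 / 2) * (-(1 + n * x ^ 2) +
      Real.sqrt ((1 + n * x ^ 2) ^ 2 + 4 * (1 - n) * x ^ 2)) := funext hf
  have hgpos : ∀ x : ℝ, 0 < (1 + n * x ^ 2) ^ 2 + 4 * (1 - n) * x ^ 2 := by
    intro x
    nlinarith [sq_nonneg x, sq_nonneg (1 + n * x ^ 2)]
  have key : ∀ x : ℝ, HasDerivAt f
      ((1/2) * (-(n * (2*x)) + (2 * (1 + n * x ^ 2) ^ 1 * (n * (2*x)) + 4*(1-n) * (2*x)) /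
        (2 * Real.sqrt ((1 + n * x ^ 2) ^ 2 + 4 * (1 - n) * x ^ 2)))) x := by
    intro x
    have hx2 : HasDerivAt (fun x : ℝ => x ^ 2) (2 * x) x := by
      simpa using hasDerivAt_pow 2 x
    have h1 : HasDerivAt (fun x : ℝ => 1 + n * x ^ 2) (n * (2 * x)) x :=
      (hx2.const_mul n).const_add 1
    have hg : HasDerivAt (fun x : ℝ => (1 + n * x ^ 2) ^ 2 + 4 * (1 - n) * x ^ 2)
        (2 * (1 + n * x ^ 2) ^ 1 * (n * (2*x)) + 4*(1-n) * (2*x)) x :=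
      (h1.pow 2).add (hx2.const_mul (4*(1-n)))
    have hs := hg.sqrt (ne_of_gt (hgpos x))
    have := ((h1.neg.add hs).const_mul (1/2 : ℝ))
    rw [hfe]
    exact this
  have hmono : StrictMonoOn f (Set.Ioi (0 : ℝ)) := by
    apply strictMonoOn_of_deriv_pos (convex_Ioi 0)
    · exact fun x _ => ((key x).continuousAt).continuousWithinAt
    · intro x hx
      rw [interior_Ioi, Set.mem_Ioi] at hx
      rw [(key x).deriv]
      set s := Real.sqrt ((1 + n * x ^ 2) ^ 2 + 4 * (1 - n) * x ^ 2) with hsdef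
      have hspos : 0 < s := Real.sqrt_pos.mpr (hgpos x)
      have hssq : s ^ 2 = (1 + n * x ^ 2) ^ 2 + 4 * (1 - n) * x ^ 2 :=
        Real.sq_sqrt (hgpos x).le
      have hns : (n * s) ^ 2 = n ^ 2 * ((1 + n * x ^ 2) ^ 2 + 4 * (1 - n) * x ^ 2) := by
        rw [mul_pow, hssq]
      have h2 : (n * s) ^ 2 < (n * (1 + n * x ^ 2) + 2 * (1 - n)) ^ 2 := by
        nlinarith [hns]
      have hkey : n * s < n * (1 + n * x ^ 2) + 2 * (1 - n) := by
        have hrhs : 0 ≤ n * (1 + n * x ^ 2) + 2 * (1 - n) := by nlinarith [sq_nonneg x]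
        exact lt_of_pow_lt_pow_left₀ 2 hrhs h2
      have hD : n * (2 * x) <
          (2 * (1 + n * x ^ 2) ^ 1 * (n * (2*x)) + 4*(1-n) * (2*x)) / (2 * s) := by
        rw [lt_div_iff₀ (by positivity)]
        nlinarith [mul_lt_mul_of_pos_left hkey (by linarith : (0:ℝ) < 4 * x)]
      linarith
  refine ⟨hmono, ?_, ?_⟩
  · intro j _
    rw [hf]
    simp only [lamPlus]
    ring_nf
  · intro j k hj hjk
    have hjpos : (0:ℝ) < (j : ℝ) := by exact_mod_cast hj
    have hkpos : (0:ℝ) < (k : ℝ) := lt_trans hjpos (by exact_mod_cast hjk)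
    have h1 : lamPlus n j = f (π * j) := by rw [hf]; simp only [lamPlus]; ring_nf
    have h2 : lamPlus n k = f (π * k) := by rw [hf]; simp only [lamPlus]; ring_nf
    rw [h1, h2]
    apply hmono (Set.mem_Ioi.mpr (by positivity)) (Set.mem_Ioi.mpr (by positivity))
    have : (j:ℝ) < k := by exact_mod_cast hjk
    nlinarith [pi_pos]
end

section
/- Let 0 < n < 1 and λ ≠ 0, and let ṽ, γ̃, σ̃ : ℝ → ℝ be differentiable with ṽ > 0, γ̃ > 0, σ̃ > 0 satisfying the tilde system: σ̃' = −(1 − n/(2−n))σ̃ + (λn/(2−n))ṽ + λ(σ̃γ̃)^{1/n}, γ̃' = (1/λ)((σ̃γ̃)^{1/n} − γ̃), ṽ' = (σ̃γ̃)^{1/n} + (n/(2−n))ṽ. Define p = γ̃/σ̃, q = nṽ/σ̃, r = (σ̃ γ̃^{1−n})^{1/n}. Then (p, q, r) satisfies the (p,q,r) system: p' = p((r−1)/λ + 1 − n/(2−n) − λpr − λq/(2−n)), q' = q(1 − λpr − λq/(2−n)) + npr, n r' = r((1−n)(r−1)/λ − 1 + n/(2−n) + λpr + λq/(2−n)). 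-/
open Real

/-- the transformation `p = γ̃/σ̃`, `q = nṽ/σ̃`, `r = (σ̃ γ̃^{1-n})^{1/n}`
turns the tilde system into the autonomous `(p,q,r)` system. -/
theorem stmt14 (n lam : ℝ) (hn0 : 0 < n) (hn1 : n < 1) (hlam : lam ≠ 0)
    (vt gt st : ℝ → ℝ)
    (hvt_diff : Differentiable ℝ vt)
    (hgt_diff : Differentiable ℝ gt)
    (hst_diff : Differentiable ℝ st)
    (hvt_pos : ∀ η : ℝ, 0 < vt η)
    (hgt_pos : ∀ η : ℝ, 0 < gt η)
    (hst_pos : ∀ η : ℝ, 0 < st η)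
    (hsys : ∀ η : ℝ,
      deriv st η = -(1 - n / (2 - n)) * st η + (lam * n / (2 - n)) * vt η
          + lam * (st η * gt η) ^ (1 / n) ∧
      deriv gt η = (1 / lam) * ((st η * gt η) ^ (1 / n) - gt η) ∧
      deriv vt η = (st η * gt η) ^ (1 / n) + (n / (2 - n)) * vt η)
    (p q r : ℝ → ℝ)
    (hp : ∀ η : ℝ, p η = gt η / st η)
    (hq : ∀ η : ℝ, q η = n * vt η / st η)
    (hr : ∀ η : ℝ, r η = (st η * gt η ^ (1 - n)) ^ (1 / n)) :
    ∀ η : ℝ,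
      deriv p η = p η * ((r η - 1) / lam + 1 - n / (2 - n)
          - lam * p η * r η - lam * q η / (2 - n)) ∧
      deriv q η = q η * (1 - lam * p η * r η - lam * q η / (2 - n)) + n * p η * r η ∧
      n * deriv r η = r η * ((1 - n) * (r η - 1) / lam - 1 + n / (2 - n)
          + lam * p η * r η + lam * q η / (2 - n)) := by
  intro η
  have hn : (n : ℝ) ≠ 0 := ne_of_gt hn0
  have h2n : (2 - n : ℝ) ≠ 0 := by nlinarith
  have hS := hst_pos η
  have hG := hgt_pos η
  have hSne : st η ≠ 0 := ne_of_gt hS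
  have hGne : gt η ≠ 0 := ne_of_gt hG
  obtain ⟨hs', hg', hv'⟩ := hsys η
  -- key identity: (st·gt)^{1/n} = r·gt
  have hGkey : (gt η ^ (1 - n)) ^ (1 / n) * gt η = gt η ^ (1 / n) := by
    rw [← rpow_mul hG.le, ← rpow_add_one hGne]
    congr 1
    field_simp
    ring
  have hA : (st η * gt η) ^ (1 / n) = r η * gt η := by
    rw [hr, mul_rpow hS.le (rpow_pos_of_pos hG _).le, mul_assoc, hGkey,
      ← mul_rpow hS.le hG.le]
  -- derivative of p
  have hpfun : p = fun x => gt x / st x := funext hp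
  have hdp : deriv p η = (deriv gt η * st η - gt η * deriv st η) / st η ^ 2 := by
    rw [hpfun]
    exact ((hgt_diff η).hasDerivAt.div (hst_diff η).hasDerivAt hSne).deriv
  -- derivative of q
  have hqfun : q = fun x => n * vt x / st x := funext hq
  have hdq : deriv q η = (n * deriv vt η * st η - n * vt η * deriv st η) / st η ^ 2 := by
    rw [hqfun]
    exact (((hvt_diff η).hasDerivAt.const_mul n).div (hst_diff η).hasDerivAt hSne).deriv
  -- r as exp of log
  have hrfun : r = fun x => Real.exp ((Real.log (st x) + (1 - n) * Real.log (gt x)) * (1 / n)) := by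
    funext x
    rw [hr, rpow_def_of_pos (mul_pos (hst_pos x) (rpow_pos_of_pos (hgt_pos x) _)), log_mul (ne_of_gt (hst_pos x))
      (ne_of_gt (rpow_pos_of_pos (hgt_pos x) _)), log_rpow (hgt_pos x)]
  have hdr : deriv r η = r η * ((deriv st η / st η + (1 - n) * (deriv gt η / gt η)) * (1 / n)) := by
    have h1 : HasDerivAt (fun x => Real.log (st x)) (deriv st η / st η) η :=
      (hst_diff η).hasDerivAt.log hSne
    have h2 : HasDerivAt (fun x => Real.log (gt x)) (deriv gt η / gt η) η :=
      (hgt_diff η).hasDerivAt.log hGne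
    have h3 : HasDerivAt (fun x => Real.exp ((Real.log (st x) + (1 - n) * Real.log (gt x)) * (1 / n))) (Real.exp ((Real.log (st η) + (1 - n) * Real.log (gt η)) * (1 / n)) * ((deriv st η / st η + (1 - n) * (deriv gt η / gt η)) * (1 / n))) η := ((h1.add (h2.const_mul (1 - n))).mul_const (1 / n)).exp
    have h4 := h3.deriv
    rw [← hrfun] at h4
    rw [h4, hrfun]
  refine ⟨?_, ?_, ?_⟩
  · rw [hdp, hs', hg', hA, hp, hq, hr]
    field_simp
    ring
  · rw [hdq, hs', hv', hA, hp, hq, hr]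
    field_simp
    ring
  · rw [hdr, hs', hg', hA, hp, hq, hr]
    field_simp
    ring
end

section
/- Let 0 < n < 1 and λ > 0 with λ ≠ (2−n)/(2(1−n)) (equivalently λ ≠ 1 + n/(2(1−n))). Then a point (p, q, r) ∈ ℝ³ is an equilibrium of the (p,q,r) system (i.e. all three right-hand sides vanish at it) if and only if (p, q, r) equals one of M₀ = (0, 0, 1 + 2λ/(2−n)), M₁ = (0, (2−n)/λ, 1 − nλ/((2−n)(1−n))), M₂ = (0, (2−n)/λ, 0), M₃ = (0, 0, 0). -/
/-- classification of the equilibria of the `(p,q,r)` system. -/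
theorem stmt15 (n lam : ℝ) (hn0 : 0 < n) (hn1 : n < 1) (hlam : 0 < lam)
    (hne : lam ≠ (2 - n) / (2 * (1 - n))) :
    ∀ p q r : ℝ,
      (p * ((r - 1) / lam + 1 - n / (2 - n) - lam * p * r - lam * q / (2 - n)) = 0 ∧
       q * (1 - lam * p * r - lam * q / (2 - n)) + n * p * r = 0 ∧
       r * ((1 - n) * (r - 1) / lam - 1 + n / (2 - n) + lam * p * r + lam * q / (2 - n)) = 0)
      ↔ ((p, q, r) = (0, 0, 1 + 2 * lam / (2 - n)) ∨
         (p, q, r) = (0, (2 - n) / lam, 1 - n * lam / ((2 - n) * (1 - n))) ∨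
         (p, q, r) = (0, (2 - n) / lam, 0) ∨
         (p, q, r) = ((0 : ℝ), (0 : ℝ), (0 : ℝ))) := by
  have h2n : (2:ℝ) - n ≠ 0 := by intro h; linarith
  have h1n : (1:ℝ) - n ≠ 0 := by intro h; linarith
  have hl : lam ≠ 0 := ne_of_gt hlam
  have hne' : lam * (2 * (1 - n)) ≠ 2 - n := by
    intro h; apply hne
    rw [eq_div_iff (by intro h'; linarith)]
    linarith
  intro p q r
  constructor
  · rintro ⟨h1, h2, h3⟩
    field_simp at h1 h2 h3
    have E1 : p * ((r-1)*(2-n) + lam*(2-n) - n*lam - lam^2*p*r*(2-n) - lam^2*q) = 0 := by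
      apply mul_right_cancel₀ h2n
      rw [zero_mul]; linear_combination (2 - n) * h1
    have E2 : q * ((2-n) - lam*p*r*(2-n) - lam*q) + n*p*r*(2-n) = 0 := by
      linear_combination h2
    have E3 : r * ((1-n)*(r-1)*(2-n) - lam*(2-n) + n*lam + lam^2*p*r*(2-n) + lam^2*q) = 0 := by
      apply mul_right_cancel₀ h2n
      rw [zero_mul]; linear_combination (2 - n) * h3
    rcases mul_eq_zero.mp E1 with hp | hF
    · -- p = 0
      subst hp
      have E2' : q * ((2-n) - lam*q) = 0 := by linear_combination E2
      rcases mul_eq_zero.mp E2' with hq | hq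
      · -- q = 0
        subst hq
        have E3' : r * ((1-n)*(r-1)*(2-n) - lam*(2-2*n)) = 0 := by linear_combination E3
        rcases mul_eq_zero.mp E3' with hr | hr
        · subst hr
          right; right; right; rfl
        · left
          have hr' : r = 1 + 2 * lam / (2 - n) := by
            have h' : (1-n) * (r * (2-n) - ((2-n) + 2*lam)) = 0 := by linear_combination hr
            rcases mul_eq_zero.mp h' with h'' | h''
            · exact absurd h'' h1n
            · field_simp
              linarith
          rw [hr']
      · -- lam * q = 2 - n
        have hqv : q = (2 - n) / lam := by
          rw [eq_div_iff hl]; linarith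
        have E3' : r * ((1-n)*(r-1)*(2-n) + n*lam) = 0 := by
          linear_combination E3 + r * lam * hq
        rcases mul_eq_zero.mp E3' with hr | hr
        · subst hr
          right; right; left; rw [hqv]
        · right; left
          have hr' : r = 1 - n * lam / ((2 - n) * (1 - n)) := by
            have h'' : r * ((2-n)*(1-n)) = (2-n)*(1-n) - n*lam := by linear_combination hr
            field_simp
            linarith
          rw [hqv, hr']
    · -- factor of eq1 vanishes : derive a contradiction
      exfalso
      have hrr : r * ((2-n)^2 * (r - 1)) = 0 := by linear_combination E3 + r * hF
      rcases mul_eq_zero.mp hrr with hr | hr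
      · -- r = 0
        subst hr
        have E2'' : q * (lam * ((2-n) - lam*q)) = 0 := by linear_combination lam * E2
        rcases mul_eq_zero.mp E2'' with hq | hq
        · subst hq
          apply hne'
          linarith [hF]
          -- hF at q=0,r=0 : -(2-n)+lam*(2-n)-n*lam = 0
        · have hq' : lam * q = 2 - n := by
            have := mul_eq_zero.mp hq
            rcases this with h | h
            · exact absurd h hl
            · linarith
          have hc : lam * n + (2 - n) = 0 := by linear_combination -hF - lam * hq'
          nlinarith [mul_pos hlam hn0]
      · -- r = 1
        have hr1 : r = 1 := by
          rcases mul_eq_zero.mp hr with h | h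
          · exact absurd h (pow_ne_zero 2 h2n)
          · linarith
        subst hr1
        have hqp : n * lam * (q + p * (2-n)) = 0 := by
          linear_combination lam * E2 - q * hF
        have hqp' : q + p * (2-n) = 0 := by
          rcases mul_eq_zero.mp hqp with h | h
          · rcases mul_eq_zero.mp h with h' | h'
            · exact absurd h' (ne_of_gt hn0)
            · exact absurd h' hl
          · exact h
        have : lam * (2 - 2*n) = 0 := by
          linear_combination hF + lam^2 * hqp'
        nlinarith
  · rintro (h | h | h | h) <;>
      simp only [Prod.mk.injEq] at h <;>
      obtain ⟨hp, hq, hr⟩ := h <;>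
      subst hp <;> subst hq <;> subst hr <;>
      refine ⟨by ring, by field_simp <;> ring, by field_simp <;> ring⟩
end

section
/- Let 0 < n < 1 and λ > 0, set r₀ = 1 + 2λ/(2−n), and assume 1/2 − nλ/((1−n)r₀) ≠ 0. Let V̄, Γ̄, Σ̄ : [0, ∞) → ℝ be three-times continuously differentiable with Γ̄ > 0, Σ̄ > 0 and V̄' > 0, satisfying the profile system λ(n/(2−n) V̄ + ξ V̄') = Σ̄', λ(2/(2−n) Γ̄ + ξ Γ̄') = V̄' − Γ̄, Σ̄ = (V̄')ⁿ / Γ̄ on [0, ∞), together with V̄(0) = 0, Γ̄'(0) = 0 and Σ̄'(0) = 0; write Γ̄₀ = Γ̄(0) and Ū₀ = V̄'(0). Define for η ∈ ℝ: p(η) = e^{2η} Γ̄(e^η)/Σ̄(e^η), q(η) = n e^η V̄(e^η)/Σ̄(e^η), r(η) = V̄'(e^η)/Γ̄(e^η). Then Ū₀ = r₀ Γ̄₀, and as η → −∞: e^{−2η} p(η) → Γ̄₀² Ū₀^{−n}, e^{−2η} q(η) → n Γ̄₀ Ū₀^{1−n}, and e^{−2η}(r(η) − r₀) → −Γ̄₀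 Ū₀^{1−n} · (λ/(1−n)) · (λ/(2−n)) · 1/(1/2 − nλ/((1−n)r₀)). That is, e^{−2η}((p(η), q(η), r(η)) − M₀) → κ X₀₂ with κ = Γ̄₀ Ū₀^{1−n} and X₀₂ = (1/r₀, n, −(λ/(1−n))(λ/(2−n))/(1/2 − nλ/((1−n)r₀))). -/
open Real Filter

lemma deriv_eqOn_nonneg {f g : ℝ → ℝ} (hf : DifferentiableAt ℝ f 0)
    (hg : DifferentiableAt ℝ g 0) (h : ∀ x : ℝ, 0 ≤ x → f x = g x) :
    ∀ x : ℝ, 0 ≤ x → deriv f x = deriv g x := by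
  intro x hx
  rcases hx.lt_or_eq with h0 | h0
  · have hev : f =ᶠ[nhds x] g := by
      filter_upwards [Ioi_mem_nhds h0] with y hy using h y hy.le
    exact hev.deriv_eq
  · subst h0
    have h1 : derivWithin f (Set.Ici 0) 0 = derivWithin g (Set.Ici 0) 0 :=
      derivWithin_congr (fun y hy => h y hy) (h 0 le_rfl)
    rwa [hf.derivWithin (uniqueDiffOn_Ici 0 0 Set.self_mem_Ici),
        hg.derivWithin (uniqueDiffOn_Ici 0 0 Set.self_mem_Ici)] at h1

/-- the orbit `(p,q,r)` associated with a profile solving the profile system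
with the symmetry boundary conditions emanates from `M₀ = (0,0,r₀)` in the direction of the
eigenvector `X₀₂`, with coefficient `κ = Γ̄₀ Ū₀^{1-n}`:
`e^{-2η}((p,q,r)(η) - M₀) → κ X₀₂` as `η → -∞`. -/
theorem stmt19 (n lam : ℝ) (hn0 : 0 < n) (hn1 : n < 1) (hlam : 0 < lam)
    (r₀ : ℝ) (hr₀ : r₀ = 1 + 2 * lam / (2 - n))
    (hden : 1 / 2 - n * lam / ((1 - n) * r₀) ≠ 0)
    (V G S : ℝ → ℝ)
    (hV : ContDiff ℝ 3 V) (hG : ContDiff ℝ 3 G) (hS : ContDiff ℝ 3 S)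
    (hG_pos : ∀ ξ : ℝ, 0 ≤ ξ → 0 < G ξ)
    (hS_pos : ∀ ξ : ℝ, 0 ≤ ξ → 0 < S ξ)
    (hV'_pos : ∀ ξ : ℝ, 0 ≤ ξ → 0 < deriv V ξ)
    (hsys : ∀ ξ : ℝ, 0 ≤ ξ →
      lam * (n / (2 - n) * V ξ + ξ * deriv V ξ) = deriv S ξ ∧
      lam * (2 / (2 - n) * G ξ + ξ * deriv G ξ) = deriv V ξ - G ξ ∧
      S ξ = (deriv V ξ) ^ n / G ξ)
    (hV0 : V 0 = 0) (hG'0 : deriv G 0 = 0) (hS'0 : deriv S 0 = 0)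
    (Γ₀ U₀ : ℝ) (hΓ₀ : Γ₀ = G 0) (hU₀ : U₀ = deriv V 0)
    (p q r : ℝ → ℝ)
    (hp : ∀ η : ℝ, p η = Real.exp (2 * η) * G (Real.exp η) / S (Real.exp η))
    (hq : ∀ η : ℝ, q η = n * Real.exp η * V (Real.exp η) / S (Real.exp η))
    (hr : ∀ η : ℝ, r η = deriv V (Real.exp η) / G (Real.exp η)) :
    U₀ = r₀ * Γ₀ ∧
    Tendsto (fun η => Real.exp (-2 * η) * p η) atBot
      (nhds (Γ₀ ^ 2 * U₀ ^ (-n))) ∧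
    Tendsto (fun η => Real.exp (-2 * η) * q η) atBot
      (nhds (n * (Γ₀ * U₀ ^ (1 - n)))) ∧
    Tendsto (fun η => Real.exp (-2 * η) * (r η - r₀)) atBot
      (nhds (-(Γ₀ * U₀ ^ (1 - n)) * ((lam / (1 - n)) * (lam / (2 - n)) *
        (1 / (1 / 2 - n * lam / ((1 - n) * r₀)))))) := by
  -- basic positivity and nonvanishing
  have h2n : (0:ℝ) < 2 - n := by linarith
  have h1n : (0:ℝ) < 1 - n := by linarith
  have hΓpos : 0 < Γ₀ := hΓ₀ ▸ hG_pos 0 le_rfl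
  have hUpos : 0 < U₀ := hU₀ ▸ hV'_pos 0 le_rfl
  have hΓne : Γ₀ ≠ 0 := hΓpos.ne'
  have hG0ne : G 0 ≠ 0 := (hG_pos 0 le_rfl).ne'
  have hS0ne : S 0 ≠ 0 := (hS_pos 0 le_rfl).ne'
  have hr₀pos : 0 < r₀ := by
    have := div_pos (by linarith : (0:ℝ) < 2 * lam) h2n
    rw [hr₀]; linarith
  -- differentiability package
  have hcV1 : ContDiff ℝ 2 (deriv V) :=
    (contDiff_succ_iff_deriv.mp (by norm_num at hV ⊢; exact hV)).2.2
  have hcV2 : ContDiff ℝ 1 (deriv (deriv V)) :=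
    (contDiff_succ_iff_deriv.mp (by norm_num at hcV1 ⊢; exact hcV1)).2.2
  have hcG1 : ContDiff ℝ 2 (deriv G) :=
    (contDiff_succ_iff_deriv.mp (by norm_num at hG ⊢; exact hG)).2.2
  have hcG2 : ContDiff ℝ 1 (deriv (deriv G)) :=
    (contDiff_succ_iff_deriv.mp (by norm_num at hcG1 ⊢; exact hcG1)).2.2
  have hcS1 : ContDiff ℝ 2 (deriv S) :=
    (contDiff_succ_iff_deriv.mp (by norm_num at hS ⊢; exact hS)).2.2
  have dV : Differentiable ℝ V := hV.differentiable (by norm_num)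
  have dG : Differentiable ℝ G := hG.differentiable (by norm_num)
  have dS : Differentiable ℝ S := hS.differentiable (by norm_num)
  have dV1 : Differentiable ℝ (deriv V) := hcV1.differentiable (by norm_num)
  have dG1 : Differentiable ℝ (deriv G) := hcG1.differentiable (by norm_num)
  have dS1 : Differentiable ℝ (deriv S) := hcS1.differentiable (by norm_num)
  have dV2 : Differentiable ℝ (deriv (deriv V)) := hcV2.differentiable (by norm_num)
  have dG2 : Differentiable ℝ (deriv (deriv G)) := hcG2.differentiable (by norm_num)
  -- claim 1
  have claim1 : U₀ = r₀ * Γ₀ := by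
    have h := (hsys 0 le_rfl).2.1
    rw [hG'0] at h
    rw [hU₀, hΓ₀, hr₀]
    field_simp at h ⊢
    linarith
  -- the exp map lands in (0,∞)
  have hexp : Tendsto Real.exp atBot (nhdsWithin (0:ℝ) (Set.Ioi 0)) :=
    tendsto_nhdsWithin_iff.mpr ⟨Real.tendsto_exp_atBot,
      Eventually.of_forall fun x => Set.mem_Ioi.mpr (Real.exp_pos x)⟩
  have hS0val : S 0 = U₀ ^ n / Γ₀ := by
    rw [hU₀, hΓ₀]; exact (hsys 0 le_rfl).2.2
  have hUnpos : 0 < U₀ ^ n := Real.rpow_pos_of_pos hUpos n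
  refine ⟨claim1, ?_, ?_, ?_⟩
  · -- p limit
    have hfun : ∀ η : ℝ, Real.exp (-2 * η) * p η = G (Real.exp η) / S (Real.exp η) := by
      intro η
      have h0 : (-2 * η) + 2 * η = 0 := by ring
      rw [hp, mul_div_assoc, ← mul_assoc, ← Real.exp_add, h0, Real.exp_zero, one_mul]
    have hc : Tendsto (fun x => G x / S x) (nhdsWithin (0:ℝ) (Set.Ioi 0)) (nhds (G 0 / S 0)) :=
      ((hG.continuous.continuousAt.div hS.continuous.continuousAt hS0ne).tendsto.mono_left
        nhdsWithin_le_nhds)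
    have hval : G 0 / S 0 = Γ₀ ^ 2 * U₀ ^ (-n) := by
      rw [hS0val, ← hΓ₀, Real.rpow_neg hUpos.le]
      field_simp [hΓ₀]
    rw [← hval]
    exact (tendsto_congr hfun).mpr (hc.comp hexp)
  · -- q limit
    have hfun : ∀ η : ℝ, Real.exp (-2 * η) * q η
        = n * (V (Real.exp η) / Real.exp η) / S (Real.exp η) := by
      intro η
      have he := Real.exp_ne_zero η
      have h1' : Real.exp (-(2 * η)) * Real.exp η * Real.exp η = 1 := by
        rw [← Real.exp_add, ← Real.exp_add, show -(2 * η) + η + η = 0 by ring, Real.exp_zero]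
      rw [hq, mul_div_assoc']
      have hkey : Real.exp (-2 * η) * (n * Real.exp η * V (Real.exp η))
          = n * (V (Real.exp η) / Real.exp η) := by
        field_simp
        linear_combination V (Real.exp η) * h1'
      rw [hkey]
    have hslope : Tendsto (fun x => V x / x) (nhdsWithin (0:ℝ) (Set.Ioi 0)) (nhds U₀) := by
      have h1 : Tendsto (slope V 0) (nhdsWithin (0:ℝ) {0}ᶜ) (nhds (deriv V 0)) :=
        hasDerivAt_iff_tendsto_slope.mp (dV 0).hasDerivAt
      have h2 := h1.mono_left (nhdsWithin_mono 0 (fun x hx => Set.mem_compl_singleton_iff.mpr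
        (ne_of_gt hx)))
      rw [← hU₀] at h2
      refine h2.congr' ?_
      filter_upwards [self_mem_nhdsWithin] with x hx
      rw [slope_def_field, hV0]
      simp only [sub_zero]
    have hc : Tendsto (fun x => n * (V x / x) / S x) (nhdsWithin (0:ℝ) (Set.Ioi 0))
        (nhds (n * U₀ / S 0)) :=
      (tendsto_const_nhds.mul hslope).div
        (hS.continuous.continuousAt.tendsto.mono_left nhdsWithin_le_nhds) hS0ne
    have hval : n * U₀ / S 0 = n * (Γ₀ * U₀ ^ (1 - n)) := by
      rw [hS0val, Real.rpow_sub hUpos, Real.rpow_one]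
      field_simp
    rw [← hval]
    exact (tendsto_congr hfun).mpr (hc.comp hexp)
  · -- r limit: the main work
    -- first derivative of the G-equation, valid on [0,∞)
    have hId2 : ∀ x : ℝ, 0 ≤ x → deriv (deriv V) x - deriv G x
        = lam * (2 / (2 - n) * deriv G x + (deriv G x + x * deriv (deriv G) x)) := by
      have h := deriv_eqOn_nonneg (f := fun ξ => deriv V ξ - G ξ)
        (g := fun ξ => lam * (2 / (2 - n) * G ξ + ξ * deriv G ξ))
        ((dV1 0).sub (dG 0))
        ((((dG 0).const_mul (2 / (2 - n))).add (differentiableAt_id.mul (dG1 0))).const_mul lam)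
        (fun x hx => ((hsys x hx).2.1).symm)
      intro x hx
      have hf : HasDerivAt (fun ξ => deriv V ξ - G ξ) (deriv (deriv V) x - deriv G x) x :=
        (dV1 x).hasDerivAt.sub (dG x).hasDerivAt
      have hg : HasDerivAt (fun ξ => lam * (2 / (2 - n) * G ξ + ξ * deriv G ξ))
          (lam * (2 / (2 - n) * deriv G x + (deriv G x + x * deriv (deriv G) x))) x := by
        have h1 : HasDerivAt (fun ξ : ℝ => ξ * deriv G ξ)
            (1 * deriv G x + x * deriv (deriv G) x) x :=
          (hasDerivAt_id x).mul (dG1 x).hasDerivAt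
        have h2 := (((dG x).hasDerivAt.const_mul (2 / (2 - n))).add h1).const_mul lam
        exact h2.congr_deriv (by ring)
      rw [← hf.deriv, ← hg.deriv]
      exact h x hx
    -- second derivative of the G-equation at 0
    have hB : deriv (deriv (deriv V)) 0
        = deriv (deriv G) 0 * (1 + lam * (2 / (2 - n) + 2)) := by
      have h := deriv_eqOn_nonneg (f := fun ξ => deriv (deriv V) ξ - deriv G ξ)
        (g := fun ξ => lam * (2 / (2 - n) * deriv G ξ + (deriv G ξ + ξ * deriv (deriv G) ξ)))
        ((dV2 0).sub (dG1 0))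
        ((((dG1 0).const_mul (2 / (2 - n))).add
          ((dG1 0).add (differentiableAt_id.mul (dG2 0)))).const_mul lam)
        hId2 0 le_rfl
      have hf : HasDerivAt (fun ξ => deriv (deriv V) ξ - deriv G ξ)
          (deriv (deriv (deriv V)) 0 - deriv (deriv G) 0) 0 :=
        (dV2 0).hasDerivAt.sub (dG1 0).hasDerivAt
      have hg : HasDerivAt
          (fun ξ => lam * (2 / (2 - n) * deriv G ξ + (deriv G ξ + ξ * deriv (deriv G) ξ)))
          (lam * (2 / (2 - n) * deriv (deriv G) 0 + (deriv (deriv G) 0 +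
            (1 * deriv (deriv G) 0 + 0 * deriv (deriv (deriv G)) 0)))) 0 := by
        have h1 : HasDerivAt (fun ξ : ℝ => ξ * deriv (deriv G) ξ)
            (1 * deriv (deriv G) 0 + 0 * deriv (deriv (deriv G)) 0) 0 :=
          (hasDerivAt_id 0).mul (dG2 0).hasDerivAt
        exact (((dG1 0).hasDerivAt.const_mul (2 / (2 - n))).add
          ((dG1 0).hasDerivAt.add h1)).const_mul lam
      rw [hf.deriv, hg.deriv] at h
      linear_combination h
    -- the identity S·G = (V')^n on [0,∞)
    have hSG : ∀ x : ℝ, 0 ≤ x → S x * G x = (deriv V x) ^ n := by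
      intro x hx
      rw [(hsys x hx).2.2]
      exact div_mul_cancel₀ _ (hG_pos x hx).ne'
    -- its first derivative on [0,∞)
    have hId3 : ∀ x : ℝ, 0 ≤ x → deriv S x * G x + S x * deriv G x
        = deriv (deriv V) x * n * (deriv V x) ^ (n - 1) := by
      have hrpow0 : DifferentiableAt ℝ (fun ξ => (deriv V ξ) ^ n) 0 :=
        ((dV1 0).hasDerivAt.rpow_const (Or.inl (hV'_pos 0 le_rfl).ne')).differentiableAt
      have h := deriv_eqOn_nonneg (f := fun ξ => S ξ * G ξ) (g := fun ξ => (deriv V ξ) ^ n)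
        ((dS 0).mul (dG 0)) hrpow0 hSG
      intro x hx
      have hf : HasDerivAt (fun ξ => S ξ * G ξ) (deriv S x * G x + S x * deriv G x) x :=
        (dS x).hasDerivAt.mul (dG x).hasDerivAt
      have hg : HasDerivAt (fun ξ => (deriv V ξ) ^ n)
          (deriv (deriv V) x * n * (deriv V x) ^ (n - 1)) x :=
        (dV1 x).hasDerivAt.rpow_const (Or.inl (hV'_pos x hx).ne')
      rw [← hf.deriv, ← hg.deriv]
      exact h x hx
    have hApos : 0 < (deriv V 0) ^ (n - 1) := Real.rpow_pos_of_pos (hV'_pos 0 le_rfl) _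
    -- V''(0) = 0
    have hV20 : deriv (deriv V) 0 = 0 := by
      have h := hId3 0 le_rfl
      rw [hS'0, hG'0] at h
      have h2 : deriv (deriv V) 0 * (n * (deriv V 0) ^ (n - 1)) = 0 := by linear_combination -h
      rcases mul_eq_zero.mp h2 with h3 | h3
      · exact h3
      · exact absurd h3 (by positivity)
    -- second derivative of S·G = (V')^n at 0
    have hA' : deriv (deriv S) 0 * G 0 + S 0 * deriv (deriv G) 0
        = deriv (deriv (deriv V)) 0 * n * (deriv V 0) ^ (n - 1) := by
      have hg4d : DifferentiableAt ℝ (fun ξ => deriv (deriv V) ξ * n * (deriv V ξ) ^ (n - 1)) 0 :=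
        (((dV2 0).mul_const n).mul
          ((dV1 0).hasDerivAt.rpow_const (Or.inl (hV'_pos 0 le_rfl).ne')).differentiableAt)
      have h := deriv_eqOn_nonneg
        (f := fun ξ => deriv S ξ * G ξ + S ξ * deriv G ξ)
        (g := fun ξ => deriv (deriv V) ξ * n * (deriv V ξ) ^ (n - 1))
        (((dS1 0).mul (dG 0)).add ((dS 0).mul (dG1 0))) hg4d hId3 0 le_rfl
      have hf : HasDerivAt (fun ξ => deriv S ξ * G ξ + S ξ * deriv G ξ)
          (deriv (deriv S) 0 * G 0 + deriv S 0 * deriv G 0 +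
            (deriv S 0 * deriv G 0 + S 0 * deriv (deriv G) 0)) 0 :=
        ((dS1 0).hasDerivAt.mul (dG 0).hasDerivAt).add
          ((dS 0).hasDerivAt.mul (dG1 0).hasDerivAt)
      have hg : HasDerivAt (fun ξ => deriv (deriv V) ξ * n * (deriv V ξ) ^ (n - 1))
          ((deriv (deriv (deriv V)) 0 * n) * (deriv V 0) ^ (n - 1)
            + (deriv (deriv V) 0 * n) *
              (deriv (deriv V) 0 * (n - 1) * (deriv V 0) ^ (n - 1 - 1))) 0 :=
        ((dV2 0).hasDerivAt.mul_const n).mul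
          ((dV1 0).hasDerivAt.rpow_const (Or.inl (hV'_pos 0 le_rfl).ne'))
      rw [hf.deriv, hg.deriv] at h
      rw [hS'0, hG'0, hV20] at h
      linear_combination h
    -- second derivative of S from the first equation, at 0
    have hS2eq : deriv (deriv S) 0
        = lam * (n / (2 - n) * deriv V 0 + (1 * deriv V 0 + 0 * deriv (deriv V) 0)) := by
      have hg5d : DifferentiableAt ℝ (fun ξ => lam * (n / (2 - n) * V ξ + ξ * deriv V ξ)) 0 :=
        (((dV 0).const_mul (n / (2 - n))).add (differentiableAt_id.mul (dV1 0))).const_mul lam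
      have h := deriv_eqOn_nonneg (f := deriv S)
        (g := fun ξ => lam * (n / (2 - n) * V ξ + ξ * deriv V ξ))
        (dS1 0) hg5d (fun x hx => ((hsys x hx).1).symm) 0 le_rfl
      have hg : HasDerivAt (fun ξ => lam * (n / (2 - n) * V ξ + ξ * deriv V ξ))
          (lam * (n / (2 - n) * deriv V 0 + (1 * deriv V 0 + 0 * deriv (deriv V) 0))) 0 := by
        have h1 : HasDerivAt (fun ξ : ℝ => ξ * deriv V ξ)
            (1 * deriv V 0 + 0 * deriv (deriv V) 0) 0 :=
          (hasDerivAt_id 0).mul (dV1 0).hasDerivAt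
        exact (((dV 0).hasDerivAt.const_mul (n / (2 - n))).add h1).const_mul lam
      rw [hg.deriv] at h
      exact h
    -- L'Hopital
    have hL : Tendsto (fun x => (deriv V x / G x - r₀) / x ^ 2)
        (nhdsWithin (0:ℝ) (Set.Ioi 0))
        (nhds ((deriv (deriv (deriv V)) 0 * G 0 - deriv V 0 * deriv (deriv G) 0) *
          (1 / (2 * (G 0) ^ 2)))) := by
      apply HasDerivAt.lhopital_zero_nhdsGT
        (f' := fun x => (deriv (deriv V) x * G x - deriv V x * deriv G x) / (G x) ^ 2)
        (g' := fun x => 2 * x)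
      · filter_upwards [self_mem_nhdsWithin] with x hx
        exact ((dV1 x).hasDerivAt.div (dG x).hasDerivAt
          (hG_pos x (le_of_lt hx)).ne').sub_const r₀
      · filter_upwards [self_mem_nhdsWithin] with x _
        simpa using hasDerivAt_pow 2 x
      · filter_upwards [self_mem_nhdsWithin] with x hx
        have hx' : (0:ℝ) < x := hx
        positivity
      · have hc : ContinuousAt (fun x => deriv V x / G x - r₀) 0 :=
          (hcV1.continuous.continuousAt.div hG.continuous.continuousAt hG0ne).sub
            continuousAt_const
        have h0 : deriv V 0 / G 0 - r₀ = 0 := by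
          rw [← hU₀, ← hΓ₀, claim1]
          field_simp
          ring
        have h1 := hc.tendsto.mono_left (nhdsWithin_le_nhds (s := Set.Ioi (0:ℝ)))
        rwa [h0] at h1
      · have h := ((continuous_pow 2).tendsto (0:ℝ)).mono_left
          (nhdsWithin_le_nhds (s := Set.Ioi (0:ℝ)))
        simpa using h
      · have hnum : Tendsto (fun x => (deriv (deriv V) x * G x - deriv V x * deriv G x) / x)
            (nhdsWithin (0:ℝ) (Set.Ioi 0))
            (nhds (deriv (deriv (deriv V)) 0 * G 0 - deriv V 0 * deriv (deriv G) 0)) := by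
          have hN : HasDerivAt (fun x => deriv (deriv V) x * G x - deriv V x * deriv G x)
              (deriv (deriv (deriv V)) 0 * G 0 - deriv V 0 * deriv (deriv G) 0) 0 := by
            have h1 := ((dV2 0).hasDerivAt.mul (dG 0).hasDerivAt).sub
              ((dV1 0).hasDerivAt.mul (dG1 0).hasDerivAt)
            exact h1.congr_deriv (by ring)
          have h2 := hasDerivAt_iff_tendsto_slope.mp hN
          have h3 := h2.mono_left (nhdsWithin_mono 0
            (fun x hx => Set.mem_compl_singleton_iff.mpr (ne_of_gt hx)))
          refine h3.congr' ?_
          filter_upwards [self_mem_nhdsWithin] with x hx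
          have hz : deriv (deriv V) 0 * G 0 - deriv V 0 * deriv G 0 = 0 := by
            rw [hV20, hG'0]; ring
          rw [slope_def_field, hz, sub_zero, sub_zero]
        have hd2 : Tendsto (fun x => 1 / (2 * (G x) ^ 2)) (nhdsWithin (0:ℝ) (Set.Ioi 0))
            (nhds (1 / (2 * (G 0) ^ 2))) := by
          have hne : (2:ℝ) * (G 0) ^ 2 ≠ 0 := mul_ne_zero two_ne_zero (pow_ne_zero 2 hG0ne)
          exact (continuousAt_const.div
            ((continuous_const.mul ((hG.continuous.pow 2))).continuousAt) hne).tendsto.mono_left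
            nhdsWithin_le_nhds
        refine Tendsto.congr' ?_ (hnum.mul hd2)
        filter_upwards [self_mem_nhdsWithin] with x hx
        rw [div_mul_div_comm, mul_one, div_div]
        ring
    -- transport through exp
    have hcomp := hL.comp hexp
    have hfun : ∀ η : ℝ, ((fun x => (deriv V x / G x - r₀) / x ^ 2) ∘ Real.exp) η
        = Real.exp (-2 * η) * (r η - r₀) := by
      intro η
      have he := Real.exp_ne_zero η
      simp only [Function.comp_apply, hr]
      have h2 : Real.exp (-2 * η) = ((Real.exp η) ^ 2)⁻¹ := by
        rw [← Real.exp_nat_mul, ← Real.exp_neg]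
        congr 1
        push_cast
        ring
      rw [h2, div_eq_mul_inv, mul_comm]
    have hT := (tendsto_congr hfun).mp hcomp
    -- algebraic identification of the limit value
    have hDne : (1 - n) * r₀ - 2 * n * lam ≠ 0 := by
      intro h
      apply hden
      have h1 : (1 - n) * r₀ ≠ 0 := (mul_pos h1n hr₀pos).ne'
      have h2 : n * lam / ((1 - n) * r₀) = 1 / 2 := by
        rw [div_eq_iff h1]; linarith
      rw [h2]; ring
    have hUn : (deriv V 0) ^ (n - 1) * U₀ = U₀ ^ n := by
      rw [← hU₀]
      calc U₀ ^ (n - 1) * U₀ = U₀ ^ (n - 1) * U₀ ^ (1:ℝ) := by rw [Real.rpow_one]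
      _ = U₀ ^ (n - 1 + 1) := (Real.rpow_add hUpos _ _).symm
      _ = U₀ ^ n := by norm_num
    have hU1n : U₀ ^ (1 - n) = ((deriv V 0) ^ (n - 1))⁻¹ := by
      rw [← hU₀, show (1 - n) = -(n - 1) by ring, Real.rpow_neg hUpos.le]
    have e2 : (2 - n) * deriv (deriv S) 0 = 2 * lam * U₀ := by
      rw [hS2eq, ← hU₀]
      field_simp
      try ring
    have e3 : (2 - n) * deriv (deriv (deriv V)) 0
        = deriv (deriv G) 0 * ((2 - n) + lam * (2 + 2 * (2 - n))) := by
      rw [hB]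
      field_simp
      try ring
    have e4 : S 0 * Γ₀ = (deriv V 0) ^ (n - 1) * U₀ := by
      rw [hS0val, div_mul_cancel₀ _ hΓne, ← hUn]
    have e6 : r₀ * (2 - n) = (2 - n) + 2 * lam := by
      rw [hr₀]
      field_simp
      try ring
    have hA'' : deriv (deriv S) 0 * Γ₀ + S 0 * deriv (deriv G) 0
        = deriv (deriv (deriv V)) 0 * n * (deriv V 0) ^ (n - 1) := by
      rw [hΓ₀]; exact hA'
    have hg2eq : deriv (deriv G) 0 *
        ((2 - n) * (deriv V 0) ^ (n - 1) * Γ₀ * ((1 - n) * r₀ - 2 * n * lam))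
        = -(2 * lam * U₀ * Γ₀ ^ 2) := by
      linear_combination ((2 - n) * Γ₀) * hA'' - Γ₀ ^ 2 * e2
        + (n * (deriv V 0) ^ (n - 1) * Γ₀) * e3
        - ((2 - n) * deriv (deriv G) 0) * e4
        - ((2 - n) * (deriv V 0) ^ (n - 1) * deriv (deriv G) 0) * claim1
        - (n * (deriv V 0) ^ (n - 1) * Γ₀ * deriv (deriv G) 0) * e6
    have hv3G : deriv (deriv (deriv V)) 0 * Γ₀ - U₀ * deriv (deriv G) 0
        = 2 * lam * Γ₀ * deriv (deriv G) 0 := by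
      have h := mul_left_cancel₀ h2n.ne' (show (2 - n) *
          (deriv (deriv (deriv V)) 0 * Γ₀ - U₀ * deriv (deriv G) 0)
          = (2 - n) * (2 * lam * Γ₀ * deriv (deriv G) 0) by
        linear_combination Γ₀ * e3 - ((2 - n) * deriv (deriv G) 0) * claim1
          - (Γ₀ * deriv (deriv G) 0) * e6)
      exact h
    have hprodne : (2 - n) * (deriv V 0) ^ (n - 1) * Γ₀ * ((1 - n) * r₀ - 2 * n * lam) ≠ 0 :=
      mul_ne_zero (mul_ne_zero (mul_ne_zero h2n.ne' hApos.ne') hΓne) hDne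
    have hg2v : deriv (deriv G) 0 = -(2 * lam * U₀ * Γ₀ ^ 2) /
        ((2 - n) * (deriv V 0) ^ (n - 1) * Γ₀ * ((1 - n) * r₀ - 2 * n * lam)) := by
      rw [eq_div_iff hprodne]
      exact hg2eq
    have hval : (deriv (deriv (deriv V)) 0 * G 0 - deriv V 0 * deriv (deriv G) 0) *
        (1 / (2 * (G 0) ^ 2))
        = -(Γ₀ * U₀ ^ (1 - n)) * ((lam / (1 - n)) * (lam / (2 - n)) *
          (1 / (1 / 2 - n * lam / ((1 - n) * r₀)))) := by
      have h1 : (1 - n) * r₀ ≠ 0 := (mul_pos h1n hr₀pos).ne'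
      have hd2 : 1 / 2 - n * lam / ((1 - n) * r₀)
          = ((1 - n) * r₀ - 2 * n * lam) / (2 * ((1 - n) * r₀)) := by
        field_simp
      rw [← hΓ₀, ← hU₀, hv3G, hg2v, hU1n, claim1, hd2, one_div_div]
      field_simp
    rw [← hval]
    exact hT
end
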